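/- Let (Ω, 𝔽, P) be a probability space, let ε_1 and ε_2 be independent real random variables with E[ε_1] = E[ε_2] = 0 and E[|ε_1|^3], E[|ε_2|^3] < ∞, let λ ∈ ℝ, and set X_1 = ε_1 and X_2 = λ X_1 + ε_2. Then the 3 × 2 real matrix A = [[E[X_1^2], E[X_1 X_2]], [E[X_1^3], E[X_1^2 X_2]], [E[X_1^2 X_2], E[X_1 X_2^2]]] has rank at most 1. -/

import Mathlib

open MeasureTheory ProbabilityTheory

private lemma cube_integrable {Ω : Type*} [MeasureSpace Ω]
    (hP : IsProbabilityMeasure (volume : Measure Ω))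
    (f : Ω → ℝ) (hm : Measurable f) (hf : MemLp f 3 volume) :
    Integrable (fun ω => f ω ^ 3) volume := by
  have h := hf.integrable_norm_rpow (by norm_num) (by norm_num)
  simp only [ENNReal.toReal_ofNat] at h
  refine h.mono' ((hm.pow_const 3).aestronglyMeasurable) (.of_forall fun ω => ?_)
  rw [Real.norm_eq_abs, abs_pow, ← Real.rpow_natCast |f ω| 3]
  norm_num

/-- Example 3.1, `ℓ = 0` case: in the two-variable model `X₁ = ε₁`, `X₂ = λ X₁ + ε₂` with
independent centered noises having finite third absolute moments, the matrix
`A^{(2,3)}_{1→2}` of second- and third-order cumulants (= moments) has rank at most `1`. -/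
theorem rank_condition_no_latent
    {Ω : Type*} [MeasureSpace Ω] (hP : IsProbabilityMeasure (volume : Measure Ω))
    (ε₁ ε₂ : Ω → ℝ)
    (hmeas₁ : Measurable ε₁) (hmeas₂ : Measurable ε₂)
    (hindep : IndepFun ε₁ ε₂ volume)
    (hmean₁ : ∫ ω, ε₁ ω = 0) (hmean₂ : ∫ ω, ε₂ ω = 0)
    (hL3₁ : MemLp ε₁ 3 volume) (hL3₂ : MemLp ε₂ 3 volume)
    (lam : ℝ) (X₁ X₂ : Ω → ℝ)
    (hX₁ : ∀ ω, X₁ ω = ε₁ ω) (hX₂ : ∀ ω, X₂ ω = lam * X₁ ω + ε₂ ω) :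
    Matrix.rank
      !![∫ ω, X₁ ω * X₁ ω,       ∫ ω, X₁ ω * X₂ ω;
         ∫ ω, X₁ ω ^ 3,          ∫ ω, X₁ ω ^ 2 * X₂ ω;
         ∫ ω, X₁ ω ^ 2 * X₂ ω,   ∫ ω, X₁ ω * X₂ ω ^ 2] ≤ 1 := by
  have := hP
  -- basic integrability
  have hi₁ : Integrable ε₁ volume := hL3₁.integrable (by norm_num)
  have hi₂ : Integrable ε₂ volume := hL3₂.integrable (by norm_num)
  have hsq₁ : Integrable (fun ω => ε₁ ω ^ 2) volume :=
    (hL3₁.mono_exponent (by norm_num)).integrable_sq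
  have hsq₂ : Integrable (fun ω => ε₂ ω ^ 2) volume :=
    (hL3₂.mono_exponent (by norm_num)).integrable_sq
  have hcube₁ : Integrable (fun ω => ε₁ ω ^ 3) volume := cube_integrable hP ε₁ hmeas₁ hL3₁
  -- independence of powers
  have hind21 : IndepFun (fun ω => ε₁ ω ^ 2) ε₂ volume :=
    hindep.comp (measurable_id.pow_const 2) measurable_id
  have hind12 : IndepFun ε₁ (fun ω => ε₂ ω ^ 2) volume :=
    hindep.comp measurable_id (measurable_id.pow_const 2)
  -- integrability of mixed products
  have him11 : Integrable (fun ω => ε₁ ω * ε₂ ω) volume := hindep.integrable_mul hi₁ hi₂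
  have him21 : Integrable (fun ω => ε₁ ω ^ 2 * ε₂ ω) volume := hind21.integrable_mul hsq₁ hi₂
  have him12 : Integrable (fun ω => ε₁ ω * ε₂ ω ^ 2) volume := hind12.integrable_mul hi₁ hsq₂
  -- vanishing mixed moments
  have hv11 : ∫ ω, ε₁ ω * ε₂ ω = 0 := by
    have h := hindep.integral_mul_eq_mul_integral hi₁.aestronglyMeasurable hi₂.aestronglyMeasurable
    simpa [Pi.mul_apply, hmean₁] using h
  have hv21 : ∫ ω, ε₁ ω ^ 2 * ε₂ ω = 0 := by
    have h := hind21.integral_mul_eq_mul_integral hsq₁.aestronglyMeasurable hi₂.aestronglyMeasurable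
    simpa [Pi.mul_apply, hmean₂] using h
  have hv12 : ∫ ω, ε₁ ω * ε₂ ω ^ 2 = 0 := by
    have h := hind12.integral_mul_eq_mul_integral hi₁.aestronglyMeasurable hsq₂.aestronglyMeasurable
    simpa [Pi.mul_apply, hmean₁] using h
  set a := ∫ ω, ε₁ ω ^ 2 with ha
  set b := ∫ ω, ε₁ ω ^ 3 with hb
  -- compute all six entries
  have e00 : ∫ ω, X₁ ω * X₁ ω = a := by
    rw [ha]; congr 1; funext ω; rw [hX₁]; ring
  have e01 : ∫ ω, X₁ ω * X₂ ω = a * lam := by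
    have : (fun ω => X₁ ω * X₂ ω) = fun ω => lam * ε₁ ω ^ 2 + ε₁ ω * ε₂ ω := by
      funext ω; rw [hX₂, hX₁]; ring
    rw [this, integral_add (hsq₁.const_mul lam) him11, integral_const_mul, hv11, ha]; ring
  have e10 : ∫ ω, X₁ ω ^ 3 = b := by
    rw [hb]; congr 1; funext ω; rw [hX₁]
  have e11 : ∫ ω, X₁ ω ^ 2 * X₂ ω = b * lam := by
    have : (fun ω => X₁ ω ^ 2 * X₂ ω) = fun ω => lam * ε₁ ω ^ 3 + ε₁ ω ^ 2 * ε₂ ω := by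
      funext ω; rw [hX₂, hX₁]; ring
    rw [this, integral_add (hcube₁.const_mul lam) him21, integral_const_mul, hv21, hb]; ring
  have e21 : ∫ ω, X₁ ω * X₂ ω ^ 2 = lam * b * lam := by
    have : (fun ω => X₁ ω * X₂ ω ^ 2) =
        fun ω => lam ^ 2 * ε₁ ω ^ 3 + ((2 * lam) * (ε₁ ω ^ 2 * ε₂ ω) + ε₁ ω * ε₂ ω ^ 2) := by
      funext ω; rw [hX₂, hX₁]; ring
    have B : Integrable (fun ω => (2 * lam) * (ε₁ ω ^ 2 * ε₂ ω) + ε₁ ω * ε₂ ω ^ 2) volume :=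
      (him21.const_mul _).add him12
    rw [this, integral_add (hcube₁.const_mul _) B]
    rw [integral_add (him21.const_mul _) him12]
    rw [integral_const_mul, integral_const_mul, hv21, hv12, hb]; ring
  have hmat :
      (!![∫ ω, X₁ ω * X₁ ω,       ∫ ω, X₁ ω * X₂ ω;
          ∫ ω, X₁ ω ^ 3,          ∫ ω, X₁ ω ^ 2 * X₂ ω;
          ∫ ω, X₁ ω ^ 2 * X₂ ω,   ∫ ω, X₁ ω * X₂ ω ^ 2] : Matrix (Fin 3) (Fin 2) ℝ) =
        !![a; b; lam*b] * !![1, lam] := by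
    rw [e00, e01, e10, e11, e21]
    ext i j
    fin_cases i <;> fin_cases j <;>
      simp [Matrix.mul_apply, Fin.sum_univ_succ] <;> ring
  rw [hmat]
  refine (Matrix.rank_mul_le_left _ _).trans ?_
  simpa using Matrix.rank_le_card_width (!![a; b; lam*b])
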